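/- arXiv:2203.08561 — 6 statements merged into one kernel-verified Lean document; each statement's English description precedes it below -/
import Mathlib

section
/- Let $A \in \mathbb{R}^{n \times n}$ and $\bar t \in [0,1)$. Suppose $\xi, \eta \in \mathbb{R}^n$ satisfy $\xi \geq 0$, $\eta \geq 0$, $(1-\bar t)\big[(A + A^T)\xi - \eta\big] + \bar t \xi = 0$, and $\xi_i \eta_i + \xi_i (A\xi)_i = 0$ for all $i$. Then $\xi^T A \xi \leq 0$; moreover if $\bar t = 0$ then $\xi^T A \xi = 0$, and if $\bar t \in (0,1)$ and $\xi \neq 0$ then $\xi^T A \xi < 0$. -/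
open Matrix BigOperators

theorem stmt1 (n : ℕ) (A : Matrix (Fin n) (Fin n) ℝ)
    (tbar : ℝ) (ht : tbar ∈ Set.Ico (0:ℝ) 1)
    (ξ η : Fin n → ℝ)
    (hξ : ∀ i, 0 ≤ ξ i) (hη : ∀ i, 0 ≤ η i)
    (heq : (1 - tbar) • ((A + Aᵀ) *ᵥ ξ - η) + tbar • ξ = 0)
    (hcomp : ∀ i, ξ i * η i + ξ i * (A *ᵥ ξ) i = 0) :
    ξ ⬝ᵥ (A *ᵥ ξ) ≤ 0 ∧
    (tbar = 0 → ξ ⬝ᵥ (A *ᵥ ξ) = 0) ∧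
    (tbar ∈ Set.Ioo (0:ℝ) 1 → ξ ≠ 0 → ξ ⬝ᵥ (A *ᵥ ξ) < 0) := by
  obtain ⟨ht0, ht1⟩ := ht
  -- sum of complementarity
  have h1 : ξ ⬝ᵥ η + ξ ⬝ᵥ (A *ᵥ ξ) = 0 := by
    have := Finset.sum_congr rfl (fun i (_ : i ∈ Finset.univ) => hcomp i)
    simpa [dotProduct, Finset.sum_add_distrib] using this
  -- dot heq with ξ
  have h2 : (1 - tbar) * (2 * (ξ ⬝ᵥ (A *ᵥ ξ)) - ξ ⬝ᵥ η) + tbar * (ξ ⬝ᵥ ξ) = 0 := by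
    have h := congrArg (fun v => ξ ⬝ᵥ v) heq
    have htr : ξ ⬝ᵥ (Aᵀ *ᵥ ξ) = ξ ⬝ᵥ (A *ᵥ ξ) := by
      rw [mulVec_transpose, dotProduct_comm, dotProduct_mulVec]
    simp only [dotProduct_add, dotProduct_smul, dotProduct_sub, add_mulVec,
      dotProduct_zero, smul_eq_mul] at h
    rw [htr] at h
    linarith [h]
  have hηnn : 0 ≤ ξ ⬝ᵥ η := Finset.sum_nonneg fun i _ => mul_nonneg (hξ i) (hη i)
  have h3 : (1 - tbar) * (3 * (ξ ⬝ᵥ (A *ᵥ ξ))) + tbar * (ξ ⬝ᵥ ξ) = 0 := by nlinarith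
  have hξsq : 0 ≤ ξ ⬝ᵥ ξ := Finset.sum_nonneg fun i _ => mul_self_nonneg _
  refine ⟨by linarith, fun h0 => by nlinarith, fun hio hne => ?_⟩
  obtain ⟨ht0', ht1'⟩ := hio
  have hpos : 0 < ξ ⬝ᵥ ξ := by
    rcases Function.ne_iff.mp hne with ⟨i, hi⟩
    have : 0 < ξ i * ξ i := by
      have := hξ i; rcases lt_or_eq_of_le this with h | h
      · positivity
      · exact absurd h.symm hi
    exact lt_of_lt_of_le this (Finset.single_le_sum (fun j _ => mul_self_nonneg (ξ j)) (Finset.mem_univ i))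
  nlinarith
end

section
/- Let $A \in \mathbb{R}^{n \times n}$ and $\bar t \in [0,1)$. Suppose $\xi', \eta' \in \mathbb{R}^n$ satisfy $\xi' \geq 0$, $\eta' \geq 0$, $(1-\bar t)\big[(A+A^T)\xi' - (1-\bar t)\eta'\big] + \bar t \xi' = 0$, and $\xi'_i \eta'_i + \xi'_i (A\xi')_i = 0$ for all $i$. Then $(\xi')^T A \xi' = -\frac{\bar t}{(1-\bar t)(3 - \bar t)} (\xi')^T \xi' \leq 0$. -/
open Matrix BigOperators

theorem stmt2 (n : ℕ) (A : Matrix (Fin n) (Fin n) ℝ)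
    (tbar : ℝ) (ht : tbar ∈ Set.Ico (0:ℝ) 1)
    (ξ' η' : Fin n → ℝ)
    (hξ : ∀ i, 0 ≤ ξ' i) (hη : ∀ i, 0 ≤ η' i)
    (heq : (1 - tbar) • ((A + Aᵀ) *ᵥ ξ' - (1 - tbar) • η') + tbar • ξ' = 0)
    (hcomp : ∀ i, ξ' i * η' i + ξ' i * (A *ᵥ ξ') i = 0) :
    ξ' ⬝ᵥ (A *ᵥ ξ') = -(tbar / ((1 - tbar) * (3 - tbar))) * (ξ' ⬝ᵥ ξ') ∧
    ξ' ⬝ᵥ (A *ᵥ ξ') ≤ 0 := by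
  obtain ⟨ht0, ht1⟩ := ht
  set q := ξ' ⬝ᵥ (A *ᵥ ξ') with hq
  set s := ξ' ⬝ᵥ ξ' with hs
  set p := ξ' ⬝ᵥ η' with hp
  have hsum : p + q = 0 := by
    have : ∑ i, (ξ' i * η' i + ξ' i * (A *ᵥ ξ') i) = 0 := by
      simp [hcomp]
    simpa [hp, hq, dotProduct, Finset.sum_add_distrib] using this
  have htr : ξ' ⬝ᵥ (Aᵀ *ᵥ ξ') = q := by
    rw [Matrix.dotProduct_mulVec, Matrix.vecMul_transpose, hq, dotProduct_comm]
  have hdot : (1 - tbar) * ((q + ξ' ⬝ᵥ (Aᵀ *ᵥ ξ')) - (1 - tbar) * p) + tbar * s = 0 := by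
    have := congrArg (fun v => ξ' ⬝ᵥ v) heq
    simpa [dotProduct_add, dotProduct_sub, dotProduct_smul, Matrix.add_mulVec, smul_eq_mul,
      mul_add, hq, hs, hp] using this
  rw [htr] at hdot
  have hpq : p = -q := by linarith
  rw [hpq] at hdot
  have hden : (1 - tbar) * (3 - tbar) > 0 := by nlinarith
  have hkey : q = -(tbar / ((1 - tbar) * (3 - tbar))) * s := by
    have h3 : (3 - tbar) ≠ 0 := by linarith
    have h1 : (1 - tbar) ≠ 0 := by linarith
    field_simp
    nlinarith [hdot]
  refine ⟨hkey, ?_⟩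
  have hsnn : 0 ≤ s := by
    rw [hs]
    exact Finset.sum_nonneg fun i _ => mul_nonneg (hξ i) (hξ i)
  rw [hkey]
  have : 0 ≤ tbar / ((1 - tbar) * (3 - tbar)) := div_nonneg ht0 hden.le
  nlinarith
end

section
/- Let $A \in \mathbb{R}^{n \times n}$ and $\bar t \in [0,1)$. Suppose $\xi, \eta, \zeta \in \mathbb{R}^n$ satisfy $\xi, \eta, \zeta \geq 0$ componentwise, $(1-\bar t)\big[(A+A^T)\xi - \eta - A^T \zeta\big] + \bar t \xi = 0$, $\xi_i \eta_i + \xi_i (A\xi)_i = 0$ for all $i$, and $\zeta_i (A\xi)_i = 0$ for all $i$. Then $\xi^T A \xi \leq 0$, with equality when $\bar t = 0$, and strict inequality when $\bar t \in (0,1)$ and $\xi \neq 0$. -/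
open Matrix BigOperators

theorem stmt3 (n : ℕ) (A : Matrix (Fin n) (Fin n) ℝ)
    (tbar : ℝ) (ht : tbar ∈ Set.Ico (0:ℝ) 1)
    (ξ η ζ : Fin n → ℝ)
    (hξ : ∀ i, 0 ≤ ξ i) (hη : ∀ i, 0 ≤ η i) (hζ : ∀ i, 0 ≤ ζ i)
    (heq : (1 - tbar) • ((A + Aᵀ) *ᵥ ξ - η - Aᵀ *ᵥ ζ) + tbar • ξ = 0)
    (hcomp1 : ∀ i, ξ i * η i + ξ i * (A *ᵥ ξ) i = 0)
    (hcomp2 : ∀ i, ζ i * (A *ᵥ ξ) i = 0) :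
    ξ ⬝ᵥ (A *ᵥ ξ) ≤ 0 ∧
    (tbar = 0 → ξ ⬝ᵥ (A *ᵥ ξ) = 0) ∧
    (tbar ∈ Set.Ioo (0:ℝ) 1 → ξ ≠ 0 → ξ ⬝ᵥ (A *ᵥ ξ) < 0) := by
  obtain ⟨ht0, ht1⟩ := ht
  set q := ξ ⬝ᵥ (A *ᵥ ξ) with hq
  have hηsum : ξ ⬝ᵥ η = -q := by
    have : (∑ i, (ξ i * η i + ξ i * (A *ᵥ ξ) i)) = 0 := by
      simp [hcomp1]
    simp only [Finset.sum_add_distrib] at this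
    simp only [dotProduct, hq]
    linarith
  have hζsum : ξ ⬝ᵥ (Aᵀ *ᵥ ζ) = 0 := by
    have h1 : ξ ⬝ᵥ (Aᵀ *ᵥ ζ) = ζ ⬝ᵥ (A *ᵥ ξ) := by
      rw [dotProduct_mulVec, vecMul_transpose, dotProduct_comm]
    rw [h1]
    simpa [dotProduct] using Finset.sum_congr rfl (fun i _ => hcomp2 i)
  have hAt : ξ ⬝ᵥ (Aᵀ *ᵥ ξ) = q := by
    rw [dotProduct_mulVec, vecMul_transpose, dotProduct_comm]
  have key : 3 * (1 - tbar) * q + tbar * (ξ ⬝ᵥ ξ) = 0 := by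
    have h := congrArg (fun v => ξ ⬝ᵥ v) heq
    simp only [dotProduct_add, dotProduct_smul, dotProduct_sub, dotProduct_zero,
      add_mulVec, smul_eq_mul] at h
    rw [hηsum, hζsum, hAt] at h
    linarith
  have hξξ : 0 ≤ ξ ⬝ᵥ ξ := by
    apply Finset.sum_nonneg
    intro i _
    exact mul_self_nonneg _
  have hqle : q ≤ 0 := by nlinarith
  refine ⟨hqle, ?_, ?_⟩
  · intro h0
    rw [h0] at key
    nlinarith
  · rintro ⟨htl, htr⟩ hne
    have hξξpos : 0 < ξ ⬝ᵥ ξ := by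
      rcases Function.ne_iff.mp hne with ⟨i, hi⟩
      have : 0 < ξ i * ξ i := by
        have := hξ i
        simp at hi
        positivity
      refine Finset.sum_pos' (fun j _ => mul_self_nonneg _) ⟨i, Finset.mem_univ i, this⟩
    nlinarith
end

section
/- Let $A \in \mathbb{R}^{n \times n}$ and $\bar t \in [0,1)$. Suppose $\xi', \eta', \zeta' \in \mathbb{R}^n$ are componentwise nonnegative and satisfy $(1-\bar t)(A + A^T)\xi' - (1-\bar t)^2 \eta' - (1-\bar t)^2 A^T \zeta' + \bar t \xi' = 0$, $\xi'_i \eta'_i + \xi'_i (A\xi')_i = 0$ for all $i$, and $\zeta'_i (A\xi')_i = 0$ for all $i$. Then $(\xi')^T A \xi' = -\frac{\bar t}{(1-\bar t)(3-\bar t)} (\xi')^T \xi' \leq 0$. -/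
open Matrix BigOperators

theorem stmt4 (n : ℕ) (A : Matrix (Fin n) (Fin n) ℝ)
    (tbar : ℝ) (ht : tbar ∈ Set.Ico (0:ℝ) 1)
    (ξ' η' ζ' : Fin n → ℝ)
    (hξ : ∀ i, 0 ≤ ξ' i) (hη : ∀ i, 0 ≤ η' i) (hζ : ∀ i, 0 ≤ ζ' i)
    (heq : (1 - tbar) • ((A + Aᵀ) *ᵥ ξ') - (1 - tbar)^2 • η'
      - (1 - tbar)^2 • (Aᵀ *ᵥ ζ') + tbar • ξ' = 0)
    (hcomp1 : ∀ i, ξ' i * η' i + ξ' i * (A *ᵥ ξ') i = 0)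
    (hcomp2 : ∀ i, ζ' i * (A *ᵥ ξ') i = 0) :
    ξ' ⬝ᵥ (A *ᵥ ξ') = -(tbar / ((1 - tbar) * (3 - tbar))) * (ξ' ⬝ᵥ ξ') ∧
    ξ' ⬝ᵥ (A *ᵥ ξ') ≤ 0 := by
  obtain ⟨ht0, ht1⟩ := ht
  set q : ℝ := ξ' ⬝ᵥ (A *ᵥ ξ') with hq
  set p : ℝ := ξ' ⬝ᵥ ξ' with hp
  have hs : (0:ℝ) < 1 - tbar := by linarith
  -- transpose dot product fact
  have htrans : ξ' ⬝ᵥ (Aᵀ *ᵥ ξ') = q := by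
    rw [hq, Matrix.dotProduct_mulVec, Matrix.vecMul_transpose, dotProduct_comm]
  -- ξ' ⬝ᵥ η' = -q
  have h1 : ξ' ⬝ᵥ η' = -q := by
    have : ξ' ⬝ᵥ η' + q = 0 := by
      rw [hq]
      simp only [dotProduct]
      rw [← Finset.sum_add_distrib]
      exact Finset.sum_eq_zero fun i _ => hcomp1 i
    linarith
  -- ξ' ⬝ᵥ (Aᵀ *ᵥ ζ') = 0
  have h2 : ξ' ⬝ᵥ (Aᵀ *ᵥ ζ') = 0 := by
    rw [Matrix.dotProduct_mulVec, Matrix.vecMul_transpose, dotProduct_comm]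
    simp only [dotProduct]
    exact Finset.sum_eq_zero fun i _ => hcomp2 i
  -- main linear identity
  have key : (1 - tbar) * (2 * q) + (1 - tbar)^2 * q + tbar * p = 0 := by
    have h := congrArg (fun v => ξ' ⬝ᵥ v) heq
    simp only [dotProduct_add, dotProduct_sub, dotProduct_smul,
      dotProduct_zero, smul_eq_mul, Matrix.add_mulVec] at h
    rw [htrans, h1, h2] at h
    rw [← hq, ← hp] at h
    nlinarith [h]
  have hden : (1 - tbar) * (3 - tbar) > 0 := by nlinarith
  have hqeq : q = -(tbar / ((1 - tbar) * (3 - tbar))) * p := by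
    have hne : (1 - tbar) * (3 - tbar) ≠ 0 := ne_of_gt hden
    have hne3 : (3 - tbar) ≠ 0 := (by linarith : (0:ℝ) < 3 - tbar).ne'
    field_simp
    nlinarith [key]
  have hppos : 0 ≤ p := by
    rw [hp]
    exact Finset.sum_nonneg fun i _ => mul_nonneg (hξ i) (hξ i)
  refine ⟨hqeq, ?_⟩
  rw [hqeq]
  have : 0 ≤ tbar / ((1 - tbar) * (3 - tbar)) := div_nonneg ht0 (le_of_lt hden)
  nlinarith
end

section
/- Let $t^k \in (0,1)$ with $t^k \to 1$, and suppose sequences $x^k, y_1^k \in \mathbb{R}^n$ with $x^k \to \bar x$, $(y_1^k)_i \to \infty$ for some fixed $i$, satisfy $(y_1^k)_i x_i^k - t^k (y_1^{(0)})_i x_i^{(0)} + (1 - t^k) x_i^k (A x^k + q)_i = 0$ and $x_i^{(0)} = \frac{1-t^k}{t^k}\big[((A+A^T)x^k)_i + q_i - (y_1^k)_i - (A^T y_2^k)_i\big] + x_i^k$ where $y_2^k \to \bar y_2$ is bounded. Then $x_i^k \to 0$ and $x_i^{(0)} = -\lim_k \frac{1-t^k}{t^k}(y_1^k)_i \leq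 0$. In particular, if $x_i^{(0)} > 0$, no such sequences exist, i.e., $y_1^k$ cannot blow up as $t^k \to 1$. -/
open Matrix BigOperators Filter

theorem stmt13 (n : ℕ) (A : Matrix (Fin n) (Fin n) ℝ) (q x0 y10 : Fin n → ℝ)
    (t : ℕ → ℝ) (ht : ∀ k, t k ∈ Set.Ioo (0:ℝ) 1)
    (htlim : Tendsto t atTop (nhds 1))
    (x y1 y2 : ℕ → Fin n → ℝ)
    (xbar y2bar : Fin n → ℝ)
    (hxlim : ∀ j, Tendsto (fun k => x k j) atTop (nhds (xbar j)))
    (hy2lim : ∀ j, Tendsto (fun k => y2 k j) atTop (nhds (y2bar j)))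
    (i : Fin n)
    (hy1blow : Tendsto (fun k => y1 k i) atTop atTop)
    (heq1 : ∀ k, y1 k i * x k i - t k * (y10 i * x0 i)
      + (1 - t k) * (x k i * (A *ᵥ x k + q) i) = 0)
    (heq2 : ∀ k, x0 i = (1 - t k) / t k *
      (((A + Aᵀ) *ᵥ x k) i + q i - y1 k i - (Aᵀ *ᵥ y2 k) i) + x k i) :
    Tendsto (fun k => x k i) atTop (nhds 0) ∧
    Tendsto (fun k => -((1 - t k) / t k * y1 k i)) atTop (nhds (x0 i)) ∧
    x0 i ≤ 0 ∧ (0 < x0 i → False) := by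
  have hmv : ∀ (M : Matrix (Fin n) (Fin n) ℝ) (v : ℕ → Fin n → ℝ) (vb : Fin n → ℝ),
      (∀ j, Tendsto (fun k => v k j) atTop (nhds (vb j))) →
      Tendsto (fun k => (M *ᵥ v k) i) atTop (nhds ((M *ᵥ vb) i)) := by
    intro M v vb hv
    simp only [Matrix.mulVec, dotProduct]
    exact tendsto_finset_sum _ fun j _ => (hv j).const_mul _
  have ht0 : ∀ k, t k ≠ 0 := fun k => ne_of_gt (ht k).1
  -- (1-t)/t → 0
  have h0 : Tendsto (fun k => (1 - t k) / t k) atTop (nhds 0) := by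
    have := ((tendsto_const_nhds : Tendsto (fun _ : ℕ => (1:ℝ)) atTop (nhds 1)).sub htlim).div htlim one_ne_zero
    simp only [sub_self, zero_div] at this
    exact this
  -- y1 * x → L
  have hL : Tendsto (fun k => y1 k i * x k i) atTop (nhds (y10 i * x0 i)) := by
    have h1 : Tendsto (fun k => t k * (y10 i * x0 i)
        - (1 - t k) * (x k i * (A *ᵥ x k + q) i)) atTop (nhds (y10 i * x0 i)) := by
      have hA : Tendsto (fun k => x k i * (A *ᵥ x k + q) i) atTop
          (nhds (xbar i * ((A *ᵥ xbar) i + q i))) := by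
        have := hmv A x xbar hxlim
        exact (hxlim i).mul (by simpa using this.add tendsto_const_nhds)
      have := (htlim.mul_const (y10 i * x0 i)).sub
        (((tendsto_const_nhds : Tendsto (fun _ : ℕ => (1:ℝ)) atTop (nhds 1)).sub htlim).mul hA)
      simpa using this
    refine h1.congr fun k => ?_
    have := heq1 k
    linarith
  -- x i → 0
  have hxi : Tendsto (fun k => x k i) atTop (nhds 0) := by
    have hinv : Tendsto (fun k => (y1 k i)⁻¹) atTop (nhds 0) :=
      hy1blow.inv_tendsto_atTop
    have := hL.mul hinv
    rw [mul_zero] at this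
    refine Tendsto.congr' ?_ this
    filter_upwards [hy1blow.eventually_gt_atTop 0] with k hk
    field_simp
  -- -(1-t)/t * y1 → x0 i
  have hkey : Tendsto (fun k => -((1 - t k) / t k * y1 k i)) atTop (nhds (x0 i)) := by
    have hB : Tendsto (fun k => ((A + Aᵀ) *ᵥ x k) i + q i - (Aᵀ *ᵥ y2 k) i) atTop
        (nhds (((A + Aᵀ) *ᵥ xbar) i + q i - (Aᵀ *ᵥ y2bar) i)) :=
      ((hmv (A + Aᵀ) x xbar hxlim).add tendsto_const_nhds).sub (hmv Aᵀ y2 y2bar hy2lim)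
    have h1 : Tendsto (fun k => x0 i - x k i
        - (1 - t k) / t k * (((A + Aᵀ) *ᵥ x k) i + q i - (Aᵀ *ᵥ y2 k) i))
        atTop (nhds (x0 i)) := by
      have := ((tendsto_const_nhds : Tendsto (fun _ : ℕ => x0 i) atTop (nhds (x0 i))).sub hxi).sub (h0.mul hB)
      simpa using this
    refine h1.congr fun k => ?_
    have := heq2 k
    ring_nf
    ring_nf at this
    linarith
  have hle : x0 i ≤ 0 := by
    refine le_of_tendsto hkey ?_
    filter_upwards [hy1blow.eventually_ge_atTop 0] with k hk
    have h1 : 0 ≤ (1 - t k) / t k :=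
      div_nonneg (by linarith [(ht k).2]) (le_of_lt (ht k).1)
    have := mul_nonneg h1 hk
    linarith
  exact ⟨hxi, hkey, hle, fun h => absurd h (not_lt.mpr hle)⟩
end

section
/- Consider the vertical linear complementarity problem arising from a zero-sum discounted ARAT game: find $\xi, \eta \in \mathbb{R}^d$ and slacks $w^1_i(s) \geq 0$ ($i \in A_s$), $w^2_j(s) \geq 0$ ($j \in B_s$) such that $w^1_i(s) = -r^1_i(s) - \beta\sum_{s'} p^1_i(s,s')\eta(s') + \xi(s) - \beta\sum_{s'} p^1_i(s,s')\xi(s')$ and $w^2_j(s) = r^2_j(s) - \eta(s) + \beta\sum_{s'} p^2_j(s,s')\eta(s') + \beta\sum_{s'} p^2_j(s,s')\xi(s')$, with $\eta(s)\prod_{i\in A_s} w^1_i(s) = 0$ and $\xi(s)\prod_{j\in B_s} w^2_j(s) = 0$ for all $s$. Then if $(\xi, \eta)$ solves this VLCP with, for each state $s$, some $i(s)$ with $w^1_{i(s)}(s) = 0$ and some $j(s)$ with $w^2_{j(s)}(s) = 0$, the vector $v(s) = \xi(s) + \eta(s)$ satisfies the Shapley optimality inequalities: $r^1_i(s) + r^2_{j(s)}(s)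 + \beta \sum_{s'} p_{i,j(s)}(s,s') v(s') \leq v(s)$ for all $i \in A_s$ and $r^1_{i(s)}(s) + r^2_j(s) + \beta \sum_{s'} p_{i(s),j}(s,s') v(s') \geq v(s)$ for all $j \in B_s$, where $p_{ij}(s,s') = p^1_i(s,s') + p^2_j(s,s')$. -/
open BigOperators

theorem stmt18 (d : ℕ) (S : Type) [Fintype S] (hcard : Fintype.card S = d)
    (m nn : S → ℕ)
    (r1 : ∀ s : S, Fin (m s) → ℝ) (r2 : ∀ s : S, Fin (nn s) → ℝ)
    (p1 : ∀ s : S, Fin (m s) → S → ℝ) (p2 : ∀ s : S, Fin (nn s) → S → ℝ)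
    (β : ℝ) (hβ : β ∈ Set.Ioo (0:ℝ) 1)
    (ξ η : S → ℝ)
    (w1 : ∀ s : S, Fin (m s) → ℝ) (w2 : ∀ s : S, Fin (nn s) → ℝ)
    (hw1def : ∀ s i, w1 s i =
      -r1 s i - β * ∑ s', p1 s i s' * η s' + ξ s - β * ∑ s', p1 s i s' * ξ s')
    (hw2def : ∀ s j, w2 s j =
      r2 s j - η s + β * ∑ s', p2 s j s' * η s' + β * ∑ s', p2 s j s' * ξ s')
    (hw1nonneg : ∀ s i, 0 ≤ w1 s i) (hw2nonneg : ∀ s j, 0 ≤ w2 s j)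
    (hcomp1 : ∀ s, η s * ∏ i, w1 s i = 0)
    (hcomp2 : ∀ s, ξ s * ∏ j, w2 s j = 0)
    (i0 : ∀ s : S, Fin (m s)) (hi0 : ∀ s, w1 s (i0 s) = 0)
    (j0 : ∀ s : S, Fin (nn s)) (hj0 : ∀ s, w2 s (j0 s) = 0)
    (v : S → ℝ) (hv : ∀ s, v s = ξ s + η s) :
    (∀ s : S, ∀ i : Fin (m s),
      r1 s i + r2 s (j0 s) + β * ∑ s', (p1 s i s' + p2 s (j0 s) s') * v s' ≤ v s) ∧
    (∀ s : S, ∀ j : Fin (nn s),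
      v s ≤ r1 s (i0 s) + r2 s j + β * ∑ s', (p1 s (i0 s) s' + p2 s j s') * v s') := by
  have key : ∀ (s : S) (i : Fin (m s)) (j : Fin (nn s)),
      β * ∑ s', (p1 s i s' + p2 s j s') * v s' =
      β * ∑ s', p1 s i s' * η s' + β * ∑ s', p1 s i s' * ξ s' +
      (β * ∑ s', p2 s j s' * η s' + β * ∑ s', p2 s j s' * ξ s') := by
    intro s i j
    simp only [hv, add_mul, mul_add, Finset.sum_add_distrib]
    ring
  constructor
  · intro s i
    have h1 := hw1nonneg s i
    rw [hw1def s i] at h1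
    have h2 := hj0 s
    rw [hw2def s (j0 s)] at h2
    rw [key s i (j0 s), hv]
    linarith
  · intro s j
    have h1 := hi0 s
    rw [hw1def s (i0 s)] at h1
    have h2 := hw2nonneg s j
    rw [hw2def s j] at h2
    rw [key s (i0 s) j, hv]
    linarith
end
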